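/- The partition matroid interdiction problem satisfies the dual reformulation: min_{x ∈ I_X} max_{y ∈ I_Y(x)} β^T y = min_{x ∈ I_X} Σ_{k=1}^{k_f} min_{j ∈ {0,…,n}} ( β_j f_k + Σ_{i ∈ F_k, i > j} (β_i − β_j)(1 − x_i) ). -/

import Mathlib

/-- The follower's optimal value: the maximum of `βᵀy` over binary `y ≤ 1 - x`
satisfying the follower's capacity constraints `∑_{i ∈ F_k} y_i ≤ f_k`. -/
noncomputable def followerVal (n kf : ℕ) (F : Fin kf → Finset ℕ) (f : Fin kf → ℕ)
    (β : ℕ → ℝ) (x : ℕ → ℝ) : ℝ :=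
  sSup {v : ℝ | ∃ y : ℕ → ℝ,
    (∀ i, y i = 0 ∨ y i = 1) ∧
    (∀ i, y i ≤ 1 - x i) ∧
    (∀ k : Fin kf, ∑ i ∈ F k, y i ≤ (f k : ℝ)) ∧
    v = ∑ i ∈ Finset.Icc 1 n, β i * y i}

/-- The leader's feasible set `I_X`: binary `x` with `∑_{i ∈ L_k} x_i ≤ l_k`. -/
def leaderFeas (kl : ℕ) (L : Fin kl → Finset ℕ) (l : Fin kl → ℕ) (x : ℕ → ℝ) : Prop :=
  (∀ i, x i = 0 ∨ x i = 1) ∧ ∀ k : Fin kl, ∑ i ∈ L k, x i ≤ (l k : ℝ)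

/-- The dual value for one follower group:
`min_{j ∈ {0,…,n}} ( β_j f + ∑_{i ∈ F, i > j} (β_i - β_j)(1 - x_i) )`. -/
noncomputable def dualVal (n : ℕ) (F : Finset ℕ) (f : ℕ) (β : ℕ → ℝ) (x : ℕ → ℝ) : ℝ :=
  Finset.inf' (Finset.range (n + 1)) ⟨0, Finset.mem_range.mpr (Nat.succ_pos n)⟩
    (fun j => β j * (f : ℝ) + ∑ i ∈ F.filter (fun i => j < i), (β i - β j) * (1 - x i))

private lemma weak_duality (n : ℕ) (β x y : ℕ → ℝ) (hβ0 : β 0 = 0)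
    (hmono : ∀ i j : ℕ, i ≤ j → j ≤ n → β i ≤ β j)
    (F : Finset ℕ) (hF : F ⊆ Finset.Icc 1 n) (f : ℕ)
    (hy01 : ∀ i, y i = 0 ∨ y i = 1) (hyx : ∀ i, y i ≤ 1 - x i)
    (hcap : ∑ i ∈ F, y i ≤ (f : ℝ)) (j : ℕ) (hj : j ≤ n) :
    ∑ i ∈ F, β i * y i
      ≤ β j * (f : ℝ) + ∑ i ∈ F.filter (fun i => j < i), (β i - β j) * (1 - x i) := by
  classical
  have hy0 : ∀ i, 0 ≤ y i := fun i => by rcases hy01 i with h | h <;> rw [h] <;> norm_num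
  have hβj : 0 ≤ β j := hβ0 ▸ hmono 0 j (Nat.zero_le j) hj
  have h1 : ∑ i ∈ F, β i * y i
      = ∑ i ∈ F, (β i - β j) * y i + β j * ∑ i ∈ F, y i := by
    rw [Finset.mul_sum, ← Finset.sum_add_distrib]
    exact Finset.sum_congr rfl fun i _ => by ring
  rw [h1]
  have h2 : ∑ i ∈ F, (β i - β j) * y i
      ≤ ∑ i ∈ F.filter (fun i => j < i), (β i - β j) * (1 - x i) := by
    rw [Finset.sum_filter]
    apply Finset.sum_le_sum
    intro i hi
    by_cases hji : j < i
    · simp only [hji, if_true]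
      have hβij : β j ≤ β i := hmono j i (le_of_lt hji) (Finset.mem_Icc.mp (hF hi)).2
      exact mul_le_mul_of_nonneg_left (hyx i) (by linarith)
    · simp only [hji, if_false]
      have hij : β i ≤ β j := hmono i j (by omega) hj
      exact mul_nonpos_of_nonpos_of_nonneg (by linarith) (hy0 i)
  have h3 : β j * ∑ i ∈ F, y i ≤ β j * f := mul_le_mul_of_nonneg_left hcap hβj
  linarith

private lemma exists_T (n : ℕ) (β x : ℕ → ℝ) (hβ0 : β 0 = 0)
    (hmono : ∀ i j : ℕ, i ≤ j → j ≤ n → β i ≤ β j)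
    (hx01 : ∀ i, x i = 0 ∨ x i = 1)
    (F : Finset ℕ) (hF : F ⊆ Finset.Icc 1 n) (f : ℕ) :
    ∃ T : Finset ℕ, T ⊆ F ∧ (∀ i ∈ T, x i = 0) ∧ T.card ≤ f ∧
      ∑ i ∈ T, β i = dualVal n F f β x := by
  classical
  set S := F.filter (fun i => x i = 0) with hSdef
  have hSF : S ⊆ F := Finset.filter_subset _ _
  have hPn : (S.filter (fun i => n < i)).card ≤ f := by
    have hempty : S.filter (fun i => n < i) = ∅ := by
      rw [Finset.filter_eq_empty_iff]
      intro i hi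
      have : i ≤ n := (Finset.mem_Icc.mp (hF (hSF hi))).2
      omega
    simp [hempty]
  have hPex : ∃ j, (S.filter (fun i => j < i)).card ≤ f := ⟨n, hPn⟩
  set j₀ := Nat.find hPex with hj₀def
  have hj₀n : j₀ ≤ n := Nat.find_le hPn
  set T := S.filter (fun i => j₀ < i) with hTdef
  have hTcard : T.card ≤ f := Nat.find_spec hPex
  have hTS : T ⊆ S := Finset.filter_subset _ _
  have hTF : T ⊆ F := hTS.trans hSF
  have hx0T : ∀ i ∈ T, x i = 0 := fun i hi => (Finset.mem_filter.mp (hTS hi)).2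
  -- the cancellation fact
  have hcancel : β j₀ * ((f : ℝ) - T.card) = 0 := by
    rcases Nat.eq_zero_or_pos j₀ with h0 | hpos
    · rw [h0, hβ0, zero_mul]
    · have hmin : ¬ (S.filter (fun i => j₀ - 1 < i)).card ≤ f :=
        Nat.find_min hPex (by omega)
      have hsub : S.filter (fun i => j₀ - 1 < i) ⊆ insert j₀ T := by
        intro i hi
        rcases Finset.mem_filter.mp hi with ⟨hiS, hlt⟩
        rcases eq_or_lt_of_le (show j₀ ≤ i by omega) with heq | hlt'
        · exact Finset.mem_insert.mpr (Or.inl heq.symm)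
        · exact Finset.mem_insert.mpr (Or.inr (Finset.mem_filter.mpr ⟨hiS, hlt'⟩))
      have hcard : (S.filter (fun i => j₀ - 1 < i)).card ≤ T.card + 1 :=
        le_trans (Finset.card_le_card hsub) (Finset.card_insert_le _ _)
      have : T.card = f := by omega
      rw [this, sub_self, mul_zero]
  have hg : β j₀ * (f : ℝ) + ∑ i ∈ F.filter (fun i => j₀ < i), (β i - β j₀) * (1 - x i)
      = ∑ i ∈ T, β i := by
    have hsub2 : T ⊆ F.filter (fun i => j₀ < i) := by
      intro i hi
      rcases Finset.mem_filter.mp hi with ⟨hiS, hlt⟩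
      exact Finset.mem_filter.mpr ⟨hSF hiS, hlt⟩
    have hz : ∀ i ∈ F.filter (fun i => j₀ < i), i ∉ T → (β i - β j₀) * (1 - x i) = 0 := by
      intro i hi hni
      rcases Finset.mem_filter.mp hi with ⟨hiF, hlt⟩
      have hiS : i ∉ S := fun h => hni (Finset.mem_filter.mpr ⟨h, hlt⟩)
      have hx1 : x i = 1 := by
        rcases hx01 i with h | h
        · exact absurd (Finset.mem_filter.mpr ⟨hiF, h⟩) hiS
        · exact h
      rw [hx1]; ring
    have heq1 : ∑ i ∈ F.filter (fun i => j₀ < i), (β i - β j₀) * (1 - x i)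
        = ∑ i ∈ T, (β i - β j₀) * (1 - x i) := (Finset.sum_subset hsub2 hz).symm
    have heq2 : ∑ i ∈ T, (β i - β j₀) * (1 - x i) = ∑ i ∈ T, (β i - β j₀) :=
      Finset.sum_congr rfl fun i hi => by rw [hx0T i hi]; ring
    rw [heq1, heq2, Finset.sum_sub_distrib, Finset.sum_const, nsmul_eq_mul]
    linear_combination hcancel
  refine ⟨T, hTF, hx0T, hTcard, ?_⟩
  apply le_antisymm
  · -- ∑_T β ≤ inf'
    apply Finset.le_inf'
    intro j hj
    have hjn : j ≤ n := by have := Finset.mem_range.mp hj; omega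
    set y : ℕ → ℝ := fun i => if i ∈ T then 1 else 0 with hydef
    have hy01 : ∀ i, y i = 0 ∨ y i = 1 := by
      intro i; by_cases h : i ∈ T <;> simp [hydef, h]
    have hyx : ∀ i, y i ≤ 1 - x i := by
      intro i
      by_cases h : i ∈ T
      · have := hx0T i h; simp [hydef, h, this]
      · simp only [hydef, h, if_neg, if_false]
        rcases hx01 i with h' | h' <;> rw [h'] <;> norm_num
    have hysum : ∀ g : ℕ → ℝ, ∑ i ∈ F, g i * y i = ∑ i ∈ T, g i := by
      intro g
      have h1 : ∀ i ∈ F, g i * y i = if i ∈ T then g i else 0 := by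
        intro i _
        by_cases h : i ∈ T <;> simp [hydef, h]
      rw [Finset.sum_congr rfl h1, ← Finset.sum_filter,
        Finset.filter_mem_eq_inter, Finset.inter_eq_right.mpr hTF]
    have hcap : ∑ i ∈ F, y i ≤ (f : ℝ) := by
      have := hysum (fun _ => 1)
      simp only [one_mul] at this
      rw [this, Finset.sum_const, nsmul_eq_mul, mul_one]
      exact_mod_cast hTcard
    have := weak_duality n β x y hβ0 hmono F hF f hy01 hyx hcap j hjn
    rw [hysum β] at this
    exact this
  · have hmem : j₀ ∈ Finset.range (n + 1) := Finset.mem_range.mpr (by omega)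
    calc dualVal n F f β x ≤ _ := Finset.inf'_le _ hmem
    _ = ∑ i ∈ T, β i := hg

private lemma follower_eq (n kf : ℕ) (β x : ℕ → ℝ) (hβ0 : β 0 = 0)
    (hmono : ∀ i j : ℕ, i ≤ j → j ≤ n → β i ≤ β j)
    (hx01 : ∀ i, x i = 0 ∨ x i = 1)
    (F : Fin kf → Finset ℕ) (f : Fin kf → ℕ)
    (hFsub : ∀ k, F k ⊆ Finset.Icc 1 n)
    (hFdisj : ∀ k k', k ≠ k' → Disjoint (F k) (F k'))
    (hFcover : ∀ i ∈ Finset.Icc 1 n, ∃ k, i ∈ F k) :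
    followerVal n kf F f β x = ∑ k : Fin kf, dualVal n (F k) (f k) β x := by
  classical
  choose T hTF hTx hTcard hTval using
    fun k => exists_T n β x hβ0 hmono hx01 (F k) (hFsub k) (f k)
  set y : ℕ → ℝ := fun i => if ∃ k, i ∈ T k then 1 else 0 with hydef
  have hy01 : ∀ i, y i = 0 ∨ y i = 1 := by
    intro i; by_cases h : ∃ k, i ∈ T k <;> simp [hydef, h]
  have hyx : ∀ i, y i ≤ 1 - x i := by
    intro i
    by_cases h : ∃ k, i ∈ T k
    · obtain ⟨k, hk⟩ := h
      have hx0 : x i = 0 := hTx k i hk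
      show (if ∃ k, i ∈ T k then (1:ℝ) else 0) ≤ 1 - x i
      rw [if_pos (⟨k, hk⟩ : ∃ k, i ∈ T k), hx0]
      norm_num
    · simp only [hydef, h, if_false]
      rcases hx01 i with h' | h' <;> rw [h'] <;> norm_num
  have hyTk : ∀ k, ∀ i ∈ F k, y i = if i ∈ T k then 1 else 0 := by
    intro k i hi
    show (if ∃ k', i ∈ T k' then (1:ℝ) else 0) = if i ∈ T k then 1 else 0
    by_cases h : i ∈ T k
    · rw [if_pos (⟨k, h⟩ : ∃ k', i ∈ T k'), if_pos h]
    · have hne : ¬ ∃ k', i ∈ T k' := by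
        rintro ⟨k', hk'⟩
        by_cases hkk : k' = k
        · exact h (hkk ▸ hk')
        · exact Finset.disjoint_left.mp (hFdisj k' k hkk)
            (hTF k' hk') hi
      rw [if_neg hne, if_neg h]
  have hsumk : ∀ (k) (g : ℕ → ℝ), ∑ i ∈ F k, g i * y i = ∑ i ∈ T k, g i := by
    intro k g
    have h1 : ∀ i ∈ F k, g i * y i = if i ∈ T k then g i else 0 := by
      intro i hi
      rw [hyTk k i hi]
      by_cases h : i ∈ T k <;> simp [h]
    rw [Finset.sum_congr rfl h1, ← Finset.sum_filter,
      Finset.filter_mem_eq_inter, Finset.inter_eq_right.mpr (hTF k)]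
  have hcapk : ∀ k, ∑ i ∈ F k, y i ≤ (f k : ℝ) := by
    intro k
    have := hsumk k (fun _ => 1)
    simp only [one_mul] at this
    rw [this, Finset.sum_const, nsmul_eq_mul, mul_one]
    exact_mod_cast hTcard k
  have hIcc : Finset.Icc 1 n = Finset.univ.biUnion F := by
    ext i
    simp only [Finset.mem_biUnion, Finset.mem_univ, true_and]
    exact ⟨fun h => hFcover i h, fun ⟨k, hk⟩ => hFsub k hk⟩
  have hdisj : (↑(Finset.univ : Finset (Fin kf)) : Set (Fin kf)).PairwiseDisjoint F :=
    fun k _ k' _ hne => hFdisj k k' hne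
  have hval : ∑ i ∈ Finset.Icc 1 n, β i * y i = ∑ k, dualVal n (F k) (f k) β x := by
    rw [hIcc, Finset.sum_biUnion hdisj]
    exact Finset.sum_congr rfl fun k _ => (hsumk k β).trans (hTval k)
  have hub : ∀ v ∈ {v : ℝ | ∃ y' : ℕ → ℝ,
      (∀ i, y' i = 0 ∨ y' i = 1) ∧ (∀ i, y' i ≤ 1 - x i) ∧
      (∀ k : Fin kf, ∑ i ∈ F k, y' i ≤ (f k : ℝ)) ∧
      v = ∑ i ∈ Finset.Icc 1 n, β i * y' i},
      v ≤ ∑ k, dualVal n (F k) (f k) β x := by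
    rintro v ⟨y', hy'01, hy'x, hy'cap, rfl⟩
    rw [hIcc, Finset.sum_biUnion hdisj]
    apply Finset.sum_le_sum
    intro k _
    apply Finset.le_inf'
    intro j hj
    exact weak_duality n β x y' hβ0 hmono (F k) (hFsub k) (f k) hy'01 hy'x (hy'cap k) j
      (by have := Finset.mem_range.mp hj; omega)
  have hmem : (∑ k, dualVal n (F k) (f k) β x) ∈ {v : ℝ | ∃ y' : ℕ → ℝ,
      (∀ i, y' i = 0 ∨ y' i = 1) ∧ (∀ i, y' i ≤ 1 - x i) ∧
      (∀ k : Fin kf, ∑ i ∈ F k, y' i ≤ (f k : ℝ)) ∧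
      v = ∑ i ∈ Finset.Icc 1 n, β i * y' i} := ⟨y, hy01, hyx, hcapk, hval.symm⟩
  unfold followerVal
  exact le_antisymm (csSup_le ⟨_, hmem⟩ hub) (le_csSup ⟨_, hub⟩ hmem)

/-- Theorem 2: the dual reformulation of the partition matroid
interdiction problem. -/
theorem pmi_dual_reformulation (n kl kf : ℕ) (β : ℕ → ℝ)
    (hβ0 : β 0 = 0)
    (hβmono : ∀ i j : ℕ, i ≤ j → j ≤ n → β i ≤ β j)
    (L : Fin kl → Finset ℕ) (l : Fin kl → ℕ)
    (hLsub : ∀ k, L k ⊆ Finset.Icc 1 n)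
    (hLdisj : ∀ k k', k ≠ k' → Disjoint (L k) (L k'))
    (hLcover : ∀ i ∈ Finset.Icc 1 n, ∃ k, i ∈ L k)
    (F : Fin kf → Finset ℕ) (f : Fin kf → ℕ)
    (hFsub : ∀ k, F k ⊆ Finset.Icc 1 n)
    (hFdisj : ∀ k k', k ≠ k' → Disjoint (F k) (F k'))
    (hFcover : ∀ i ∈ Finset.Icc 1 n, ∃ k, i ∈ F k) :
    sInf {v : ℝ | ∃ x : ℕ → ℝ, leaderFeas kl L l x ∧ v = followerVal n kf F f β x}
      = sInf {v : ℝ | ∃ x : ℕ → ℝ, leaderFeas kl L l x ∧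
          v = ∑ k : Fin kf, dualVal n (F k) (f k) β x} := by
  have hset : {v : ℝ | ∃ x : ℕ → ℝ, leaderFeas kl L l x ∧ v = followerVal n kf F f β x}
      = {v : ℝ | ∃ x : ℕ → ℝ, leaderFeas kl L l x ∧
          v = ∑ k : Fin kf, dualVal n (F k) (f k) β x} := by
    ext v
    simp only [Set.mem_setOf_eq]
    constructor
    · rintro ⟨x, hx, rfl⟩
      exact ⟨x, hx, follower_eq n kf β x hβ0 hβmono hx.1 F f hFsub hFdisj hFcover⟩
    · rintro ⟨x, hx, rfl⟩
      exact ⟨x, hx, (follower_eq n kf β x hβ0 hβmono hx.1 F f hFsub hFdisj hFcover).symm⟩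
  rw [hset]
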